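/- Let 𝔸 be a unital real Banach algebra and f_1,…,f_d ∈ 𝔸 invertible elements such that each f_l² is central in 𝔸. Then for every A ∈ 𝔸 the product of exponentials can be moved past A at the cost of sign flips on the decomposed parts: (∏_{l=1}^{d} exp(−f_l)) · A = Σ_{j∈{0,1}^d} A_{c^j(←F)} · ∏_{l=1}^{d} exp(−(−1)^{j_l} f_l), where F = (f_1,…,f_d) and all products over l are taken in increasing order of l. -/

import Mathlib

noncomputable section

variable {𝔸 : Type*}

/-- The commutative (`s = 0`) and anticommutative (`s = 1`) part of `A` with respect to an
invertible element `B`: `A_{c^s(B)} = ½(A + (−1)^s B⁻¹AB)`. -/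
def cPart [Ring 𝔸] [Algebra ℝ 𝔸] (B : 𝔸) (s : Fin 2) (A : 𝔸) : 𝔸 :=
  (2 : ℝ)⁻¹ • (A + (-1 : 𝔸) ^ (s : ℕ) * (Ring.inverse B * A * B))

/-- The backward iterated decomposition `A_{c^j(←B)}`, applying the last list entry first. -/
def cBwd [Ring 𝔸] [Algebra ℝ 𝔸] (L : List (𝔸 × Fin 2)) (A : 𝔸) : 𝔸 :=
  L.foldr (fun p acc => cPart p.1 p.2 acc) A

lemma semiconj_exp [NormedRing 𝔸] [NormedAlgebra ℝ 𝔸] [CompleteSpace 𝔸]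
    {a x y : 𝔸} (h : SemiconjBy a x y) :
    a * NormedSpace.exp x = NormedSpace.exp y * a := by
  have h1 : (ContinuousLinearMap.mul ℝ 𝔸 a) (NormedSpace.exp x)
      = ((ContinuousLinearMap.mul ℝ 𝔸).flip a) (NormedSpace.exp y) := by
    simp only [NormedSpace.exp_eq_tsum ℝ]
    rw [ContinuousLinearMap.map_tsum _ (NormedSpace.expSeries_summable' x),
      ContinuousLinearMap.map_tsum _ (NormedSpace.expSeries_summable' y)]
    congr 1
    ext n
    rw [map_smul, map_smul]
    simp only [ContinuousLinearMap.mul_apply', ContinuousLinearMap.flip_apply]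
    rw [(h.pow_right n).eq]
  simpa using h1

lemma cPart_add [Ring 𝔸] [Algebra ℝ 𝔸] (B : 𝔸) (A : 𝔸) :
    cPart B 0 A + cPart B 1 A = A := by
  simp only [cPart, Fin.val_zero, Fin.val_one, pow_zero, pow_one, one_mul, neg_one_mul,
    ← smul_add]
  rw [show A + Ring.inverse B * A * B + (A + -(Ring.inverse B * A * B)) = A + A by abel,
    ← two_smul ℝ A, smul_smul]
  norm_num

lemma exp_neg_mul [NormedRing 𝔸] [NormedAlgebra ℝ 𝔸] [CompleteSpace 𝔸]
    {f : 𝔸} (hU : IsUnit f) (hc : f ^ 2 ∈ Set.center 𝔸) (A : 𝔸) :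
    NormedSpace.exp (-f) * A =
      ∑ s : Fin 2, cPart f s A * NormedSpace.exp (-((-1 : ℝ) ^ ((s : ℕ)) • f)) := by
  have hc' : ∀ g : 𝔸, g * f ^ 2 = f ^ 2 * g := fun g => Semigroup.mem_center_iff.mp hc g
  have hfu : f * Ring.inverse f = 1 := Ring.mul_inverse_cancel f hU
  have huf : Ring.inverse f * f = 1 := Ring.inverse_mul_cancel f hU
  set u := Ring.inverse f with hu
  have h1 : f * (u * A * f) = A * f := by
    calc f * (u * A * f) = (f * u) * (A * f) := by noncomm_ring
    _ = A * f := by rw [hfu, one_mul]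
  have h2 : (u * A * f) * f = f * A := by
    calc (u * A * f) * f = u * (A * f ^ 2) := by noncomm_ring
    _ = u * (f ^ 2 * A) := by rw [hc']
    _ = ((u * f) * f) * A := by noncomm_ring
    _ = f * A := by rw [huf, one_mul]
  have hcf : f * (cPart f 0 A) = (cPart f 0 A) * f := by
    simp only [cPart, Fin.val_zero, pow_zero, one_mul]
    rw [mul_smul_comm, smul_mul_assoc, mul_add, add_mul, h1, h2, add_comm]
  have hcomm : Commute (-f) (cPart f 0 A) := Commute.neg_left hcf
  have hsemi : SemiconjBy (cPart f 1 A) f (-f) := by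
    simp only [cPart, Fin.val_one, pow_one, neg_one_mul, SemiconjBy]
    have hX : (A + -(u * A * f)) * f = A * f + -(f * A) := by
      rw [add_mul, neg_mul, h2]
    have hY : f * (A + -(u * A * f)) = f * A + -(A * f) := by
      rw [mul_add, mul_neg, h1]
    rw [smul_mul_assoc, mul_smul_comm, hX, neg_mul, hY]
    congr 1
    abel
  have e0 : NormedSpace.exp (-f) * cPart f 0 A = cPart f 0 A * NormedSpace.exp (-f) :=
    (hcomm.exp_left).eq
  have e1 : NormedSpace.exp (-f) * cPart f 1 A = cPart f 1 A * NormedSpace.exp f :=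
    (semiconj_exp hsemi).symm
  calc NormedSpace.exp (-f) * A
      = NormedSpace.exp (-f) * (cPart f 0 A + cPart f 1 A) := by rw [cPart_add]
    _ = cPart f 0 A * NormedSpace.exp (-f) + cPart f 1 A * NormedSpace.exp f := by
        rw [mul_add, e0, e1]
    _ = _ := by
        rw [Fin.sum_univ_two]
        norm_num

/-- A product of exponentials of invertible elements with central squares can be moved past a
multivector `A` at the cost of sign flips on the decomposed parts. -/
theorem prod_exp_mul_eq_sum_cBwd [NormedRing 𝔸] [NormedAlgebra ℝ 𝔸] [CompleteSpace 𝔸]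
    {d : ℕ} (f : Fin d → 𝔸) (hU : ∀ l, IsUnit (f l))
    (hc : ∀ l, f l ^ 2 ∈ Set.center 𝔸) (A : 𝔸) :
    ((List.ofFn (fun l => NormedSpace.exp (-(f l)))).prod) * A =
      ∑ j : Fin d → Fin 2,
        cBwd (List.ofFn (fun l => (f l, j l))) A *
          ((List.ofFn (fun l =>
            NormedSpace.exp (-((-1 : ℝ) ^ ((j l : ℕ)) • f l)))).prod) := by
  induction d generalizing A with
  | zero => simp [cBwd]
  | succ d ih =>
    rw [← (Fin.snocEquiv (fun _ => Fin 2)).sum_comp, Fintype.sum_prod_type]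
    rw [List.ofFn_succ' (fun l => NormedSpace.exp (-(f l))), List.concat_eq_append,
      List.prod_append, List.prod_singleton, mul_assoc,
      exp_neg_mul (hU (Fin.last d)) (hc (Fin.last d)) A, Finset.mul_sum]
    refine Finset.sum_congr rfl fun s _ => ?_
    rw [← mul_assoc, ih (fun l => f l.castSucc) (fun l => hU _) (fun l => hc _)
      (cPart (f (Fin.last d)) s A), Finset.sum_mul]
    refine Finset.sum_congr rfl fun j _ => ?_
    have hsnoc : ∀ l : Fin d, Fin.snocEquiv (fun _ => Fin 2) (s, j) l.castSucc = j l := by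
      intro l; simp [Fin.snocEquiv]
    have hlast : Fin.snocEquiv (fun _ => Fin 2) (s, j) (Fin.last d) = s := by
      simp [Fin.snocEquiv]
    rw [List.ofFn_succ' (fun l => (f l, Fin.snocEquiv (fun _ => Fin 2) (s, j) l)),
      List.ofFn_succ' (fun l =>
        NormedSpace.exp (-((-1 : ℝ) ^ ((Fin.snocEquiv (fun _ => Fin 2) (s, j) l : ℕ)) • f l))),
      List.concat_eq_append, List.concat_eq_append, List.prod_append, List.prod_singleton]
    simp only [hsnoc, hlast]
    simp only [cBwd, List.foldr_append, List.foldr_cons, List.foldr_nil]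
    rw [mul_assoc]
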